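/- Let d be a derivation of 𝐧₁ and write d(e₂) = Σ_{j=1}^{3t} β_j e_j. Then the coefficients β_{3k-2} vanish for all 1 ≤ k ≤ t. -/

import Mathlib

/-- Structure constants of `𝐧₁`. -/
def cc (i j : ℕ) : ℤ :=
  if ((i : ℤ) - j) % 3 = 1 then 1 else if ((i : ℤ) - j) % 3 = 2 then -1 else 0

/-- if `d` is a derivation of `𝐧₁` and `d(e₂) = Σ_{j=1}^{3t} β_j e_j`, then
`β_{3k-2} = 0` for all `1 ≤ k ≤ t`. -/
theorem statement8 (L : Type*) [LieRing L] [LieAlgebra ℂ L]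
    (b : Module.Basis {n : ℕ // 0 < n} ℂ L)
    (hbr : ∀ (i j : ℕ) (hi : 0 < i) (hj : 0 < j),
      ⁅b ⟨i, hi⟩, b ⟨j, hj⟩⁆ = (cc i j : ℂ) • b ⟨i + j, by omega⟩)
    (d : LieDerivation ℂ L L) (t : ℕ) (β : ℕ → ℂ)
    (h : d (b ⟨2, by omega⟩) =
      ∑ j ∈ Finset.range (3 * t), β (j + 1) • b ⟨j + 1, by omega⟩) :
    ∀ k : ℕ, 1 ≤ k → k ≤ t → β (3 * k - 2) = 0 := by
  intro k hk1 hk2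
  set e2 : L := b ⟨2, by omega⟩ with he2
  set e3 : L := b ⟨3, by omega⟩ with he3
  set e5 : L := b ⟨5, by omega⟩ with he5
  set idx : {n : ℕ // 0 < n} := ⟨3*k+3, by omega⟩ with hidx
  have h23 : ⁅e2, e3⁆ = -e5 := by
    rw [he2, he3, hbr 2 3 (by omega) (by omega)]
    norm_num [cc, he5]
  have h52 : ⁅e5, e2⁆ = 0 := by
    rw [he5, he2, hbr 5 2 (by omega) (by omega)]
    norm_num [cc]
  have hd5 : d e5 = -(⁅e2, d e3⁆ + ⁅d e2, e3⁆) := by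
    have h' : d ⁅e2, e3⁆ = ⁅e2, d e3⁆ + ⁅d e2, e3⁆ := d.apply_lie_eq_add e2 e3
    rw [h23, map_neg] at h'
    linear_combination (norm := module) -h'
  have key : (0 : L) = ⁅e5, d e2⁆ + ⁅d e5, e2⁆ := by
    have h' : d ⁅e5, e2⁆ = ⁅e5, d e2⁆ + ⁅d e5, e2⁆ := d.apply_lie_eq_add e5 e2
    rw [h52, map_zero] at h'
    exact h'
  rw [hd5, neg_lie, add_lie] at key
  have hB : b.repr ⁅⁅e2, d e3⁆, e2⁆ idx = 0 := by
    let φ : L →ₗ[ℂ] ℂ :=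
      { toFun := fun v => b.repr ⁅⁅e2, v⁆, e2⁆ idx
        map_add' := by intro x y; simp [lie_add, add_lie]
        map_smul' := by intro c x; simp [lie_smul, smul_lie] }
    have hφ : φ = 0 := by
      apply b.ext
      rintro ⟨i, hi⟩
      show b.repr ⁅⁅e2, b ⟨i, hi⟩⁆, e2⁆ idx = 0
      rw [he2, hbr 2 i (by omega) hi, smul_lie, hbr (2+i) 2 (by omega) (by omega)]
      simp only [map_smul, smul_eq_mul, Module.Basis.repr_self, Finsupp.smul_apply]
      by_cases hcase : 2 + i + 2 = 3 * k + 3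
      · have hcc : cc 2 i = 0 := by
          simp only [cc]
          split_ifs with h1 h2 <;> first | rfl | omega
        simp [hcc]
      · rw [Finsupp.single_apply_eq_zero.mpr]
        · simp
        · intro hh
          exfalso; apply hcase
          have := congrArg Subtype.val hh
          simp only [hidx] at this
          omega
    have h0 : φ (d e3) = 0 := by rw [hφ]; rfl
    simpa [φ] using h0
  have hA : b.repr ⁅⁅d e2, e3⁆, e2⁆ idx = -β (3 * k - 2) := by
    let ψ : L →ₗ[ℂ] ℂ :=
      { toFun := fun v => b.repr ⁅⁅v, e3⁆, e2⁆ idx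
        map_add' := by intro x y; simp [add_lie]
        map_smul' := by intro c x; simp [smul_lie] }
    have hψ : ψ (d e2) = -β (3 * k - 2) := by
      rw [h, map_sum]
      rw [Finset.sum_eq_single (3 * k - 3)]
      · show b.repr ⁅⁅β (3*k-3+1) • b ⟨3*k-3+1, by omega⟩, e3⁆, e2⁆ idx = _
        rw [he3, he2, smul_lie, hbr (3*k-3+1) 3 (by omega) (by omega), smul_lie, smul_lie,
          hbr (3*k-3+1+3) 2 (by omega) (by omega)]
        have hc1 : cc (3*k-3+1) 3 = 1 := by
          simp only [cc]; split_ifs with h1 h2 <;> omega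
        have hc2 : cc (3*k-3+1+3) 2 = -1 := by
          simp only [cc]; split_ifs with h1 h2 <;> omega
        have hidx' : (⟨3*k-3+1+3+2, by omega⟩ : {n : ℕ // 0 < n}) = idx := by
          rw [hidx]; congr 1; omega
        rw [hc1, hc2, hidx']
        simp only [map_smul, Module.Basis.repr_self, Finsupp.smul_apply, Finsupp.single_eq_same,
          smul_eq_mul]
        have h' : 3*k-3+1 = 3*k-2 := by omega
        rw [h']; push_cast; ring
      · intro j hj hne
        show b.repr ⁅⁅β (j+1) • b ⟨j+1, by omega⟩, e3⁆, e2⁆ idx = 0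
        rw [he3, he2, smul_lie, hbr (j+1) 3 (by omega) (by omega), smul_lie, smul_lie,
          hbr (j+1+3) 2 (by omega) (by omega)]
        simp only [map_smul, Module.Basis.repr_self, Finsupp.smul_apply, smul_eq_mul]
        rw [Finsupp.single_apply_eq_zero.mpr]
        · simp
        · intro hh
          exfalso; apply hne
          have := congrArg Subtype.val hh
          simp only [hidx] at this
          omega
      · intro hnm
        exfalso; apply hnm
        simp only [Finset.mem_range]; omega
    exact hψ
  have hC : b.repr ⁅e5, d e2⁆ idx = β (3 * k - 2) := by
    let ψ : L →ₗ[ℂ] ℂ :=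
      { toFun := fun v => b.repr ⁅e5, v⁆ idx
        map_add' := by intro x y; simp [lie_add]
        map_smul' := by intro c x; simp [lie_smul] }
    have hψ : ψ (d e2) = β (3 * k - 2) := by
      rw [h, map_sum]
      rw [Finset.sum_eq_single (3 * k - 3)]
      · show b.repr ⁅e5, β (3*k-3+1) • b ⟨3*k-3+1, by omega⟩⁆ idx = _
        rw [he5, lie_smul, hbr 5 (3*k-3+1) (by omega) (by omega)]
        have hc1 : cc 5 (3*k-3+1) = 1 := by
          simp only [cc]; split_ifs with h1 h2 <;> omega
        have hidx' : (⟨5+(3*k-3+1), by omega⟩ : {n : ℕ // 0 < n}) = idx := by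
          rw [hidx]; congr 1; omega
        rw [hc1, hidx']
        simp only [map_smul, Module.Basis.repr_self, Finsupp.smul_apply, Finsupp.single_eq_same,
          smul_eq_mul]
        have h' : 3*k-3+1 = 3*k-2 := by omega
        rw [h']; push_cast; ring
      · intro j hj hne
        show b.repr ⁅e5, β (j+1) • b ⟨j+1, by omega⟩⁆ idx = 0
        rw [he5, lie_smul, hbr 5 (j+1) (by omega) (by omega)]
        simp only [map_smul, Module.Basis.repr_self, Finsupp.smul_apply, smul_eq_mul]
        rw [Finsupp.single_apply_eq_zero.mpr]
        · simp
        · intro hh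
          exfalso; apply hne
          have := congrArg Subtype.val hh
          simp only [hidx] at this
          omega
      · intro hnm
        exfalso; apply hnm
        simp only [Finset.mem_range]; omega
    exact hψ
  have hfin := congrArg (fun x => b.repr x idx) key
  simp only [map_add, map_neg, Finsupp.add_apply, Finsupp.neg_apply, Finsupp.coe_zero,
    Pi.zero_apply, map_zero] at hfin
  rw [hA, hB, hC] at hfin
  have : (2 : ℂ) * β (3 * k - 2) = 0 := by linear_combination -hfin
  simpa using this
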